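/- Let X₁ ⊆ X and Y₁ ⊆ Y have the extension property in topological spaces X and Y respectively, e : X₁ → Y₁ a homeomorphism, E = {(x, e(x)) : x ∈ X₁}, and g : E → ℝ a function of the first Baire class. If E is functionally closed in X × Y, then there exists a separately continuous function f : X × Y → ℝ with f restricted to E equal to g. -/

import Mathlib

open Set Filter Topology
set_option linter.unusedSectionVars false

noncomputable section

namespace SepExtAux

variable {X Y : Type*} [TopologicalSpace X] [TopologicalSpace Y]
variable (φ : X × Y → ℝ) (v : ℕ → X → ℝ) (w : ℕ → Y → ℝ)

def Cf (n : ℕ) (p : X × Y) : ℝ := ∑ k ∈ Finset.range (n + 1), |v k p.1 - w k p.2|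

def mu (n : ℕ) (p : X × Y) : ℝ := max 0 (min 1 (2 - (n : ℝ) * (|φ p| + Cf v w n p)))

def Sf (M : ℕ) (p : X × Y) : ℝ :=
  v 0 p.1 + ∑ n ∈ Finset.range M, mu φ v w (n + 1) p * (v (n + 1) p.1 - v n p.1)

def Ff (p : X × Y) : ℝ := limUnder atTop fun M => Sf φ v w M p

lemma Cf_nonneg (n : ℕ) (p : X × Y) : 0 ≤ Cf v w n p :=
  Finset.sum_nonneg fun _ _ => abs_nonneg _

lemma Cf_mono {m n : ℕ} (h : m ≤ n) (p : X × Y) : Cf v w m p ≤ Cf v w n p :=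
  Finset.sum_le_sum_of_subset_of_nonneg
    (Finset.range_subset_range.2 (by omega)) (fun _ _ _ => abs_nonneg _)

lemma Cf_single (n : ℕ) (p : X × Y) : |v n p.1 - w n p.2| ≤ Cf v w n p :=
  Finset.single_le_sum (f := fun k => |v k p.1 - w k p.2|)
    (fun _ _ => abs_nonneg _) (Finset.self_mem_range_succ n)

lemma Cf_cont (hv : ∀ n, Continuous (v n)) (hw : ∀ n, Continuous (w n)) (n : ℕ) :
    Continuous (Cf v w n) :=
  continuous_finset_sum _ fun k _ =>
    (((hv k).comp continuous_fst).sub ((hw k).comp continuous_snd)).abs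

lemma Cf_zero {p : X × Y} (h : ∀ k, v k p.1 = w k p.2) (n : ℕ) : Cf v w n p = 0 :=
  Finset.sum_eq_zero fun k _ => by rw [h k]; simp

lemma mu_nonneg (n : ℕ) (p : X × Y) : 0 ≤ mu φ v w n p := le_max_left _ _

lemma mu_le_one (n : ℕ) (p : X × Y) : mu φ v w n p ≤ 1 :=
  max_le zero_le_one (min_le_left _ _)

lemma mu_anti {m n : ℕ} (h : m ≤ n) (p : X × Y) : mu φ v w n p ≤ mu φ v w m p := by
  apply max_le_max le_rfl
  apply min_le_min le_rfl
  have h1 : (m : ℝ) * (|φ p| + Cf v w m p) ≤ (n : ℝ) * (|φ p| + Cf v w n p) := by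
    apply mul_le_mul (Nat.cast_le.2 h)
      (add_le_add le_rfl (Cf_mono v w h p))
      (add_nonneg (abs_nonneg _) (Cf_nonneg v w m p)) (Nat.cast_nonneg n)
  linarith

lemma mu_one {n : ℕ} {p : X × Y} (h : (n : ℝ) * (|φ p| + Cf v w n p) ≤ 1) :
    mu φ v w n p = 1 := by
  have : min 1 (2 - (n : ℝ) * (|φ p| + Cf v w n p)) = 1 := min_eq_left (by linarith)
  rw [mu, this, max_eq_right zero_le_one]

lemma mu_zero {n : ℕ} {p : X × Y} (h : 2 ≤ (n : ℝ) * |φ p|) : mu φ v w n p = 0 := by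
  have h2 : (n : ℝ) * |φ p| ≤ (n : ℝ) * (|φ p| + Cf v w n p) :=
    mul_le_mul_of_nonneg_left (by linarith [Cf_nonneg v w n p]) (Nat.cast_nonneg n)
  have : min 1 (2 - (n : ℝ) * (|φ p| + Cf v w n p)) ≤ 0 :=
    le_trans (min_le_right _ _) (by linarith)
  rw [mu, max_eq_left this]

lemma mu_pos {n : ℕ} {p : X × Y} (h : 0 < mu φ v w n p) :
    (n : ℝ) * Cf v w n p < 2 := by
  by_contra hc
  push_neg at hc
  have h2 : (n : ℝ) * Cf v w n p ≤ (n : ℝ) * (|φ p| + Cf v w n p) :=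
    mul_le_mul_of_nonneg_left (by linarith [abs_nonneg (φ p)]) (Nat.cast_nonneg n)
  have : min 1 (2 - (n : ℝ) * (|φ p| + Cf v w n p)) ≤ 0 :=
    le_trans (min_le_right _ _) (by linarith)
  rw [mu, max_eq_left this] at h
  exact lt_irrefl _ h

lemma mu_cont (hφ : Continuous φ) (hv : ∀ n, Continuous (v n))
    (hw : ∀ n, Continuous (w n)) (n : ℕ) : Continuous (mu φ v w n) :=
  continuous_const.max (continuous_const.min (continuous_const.sub
    (continuous_const.mul (hφ.abs.add (Cf_cont v w hv hw n)))))

lemma Sf_zero (p : X × Y) : Sf φ v w 0 p = v 0 p.1 := by simp [Sf]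

lemma Sf_succ (M : ℕ) (p : X × Y) :
    Sf φ v w (M + 1) p = Sf φ v w M p + mu φ v w (M + 1) p * (v (M + 1) p.1 - v M p.1) := by
  simp [Sf, Finset.sum_range_succ]; ring

lemma Sf_telescope {p : X × Y} :
    ∀ M : ℕ, (∀ k, 1 ≤ k → k ≤ M → mu φ v w k p = 1) → Sf φ v w M p = v M p.1 := by
  intro M
  induction M with
  | zero => intro _; exact Sf_zero φ v w p
  | succ M ih =>
    intro h
    rw [Sf_succ, ih (fun k hk1 hk2 => h k hk1 (by omega)), h (M + 1) (by omega) le_rfl]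
    ring

lemma Sf_const {p : X × Y} (M₀ : ℕ) (h : ∀ n, M₀ < n → mu φ v w n p = 0) :
    ∀ M, M₀ ≤ M → Sf φ v w M p = Sf φ v w M₀ p := by
  intro M hM
  induction M, hM using Nat.le_induction with
  | base => rfl
  | succ M hM ih => rw [Sf_succ, h (M + 1) (by omega), ih]; ring

lemma key {a b : ℝ} {p : X × Y} {N : ℕ}
    (hSN : Sf φ v w N p = v N p.1) (hN : v N p.1 ∈ Icc a b)
    (hn : ∀ n, N < n → 0 < mu φ v w n p → v n p.1 ∈ Icc a b) :
    ∀ M, N ≤ M → Sf φ v w M p ∈ Icc a b := by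
  have hab : a ≤ b := le_trans hN.1 hN.2
  have main : ∀ M, N ≤ M → ∀ z ∈ Icc a b,
      Sf φ v w M p + mu φ v w (M + 1) p * (z - v M p.1) ∈ Icc a b := by
    intro M hM
    induction M, hM using Nat.le_induction with
    | base =>
      intro z hz
      rw [hSN]
      have h0 := mu_nonneg φ v w (N + 1) p
      have h1 := mu_le_one φ v w (N + 1) p
      constructor
      · nlinarith [hN.1, hz.1]
      · nlinarith [hN.2, hz.2]
    | succ M hM ih =>
      intro z hz
      rcases eq_or_lt_of_le (mu_nonneg φ v w (M + 1) p) with hmu | hmu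
      · have hmu1 : mu φ v w (M + 1) p = 0 := hmu.symm
        have hmu2 : mu φ v w (M + 2) p = 0 :=
          le_antisymm ((mu_anti φ v w (show M + 1 ≤ M + 2 by omega) p).trans hmu1.le)
            (mu_nonneg φ v w _ p)
        have h := ih (v N p.1) hN
        rw [hmu1] at h
        rw [Sf_succ, hmu1, hmu2]
        simpa using h
      · have hvM1 : v (M + 1) p.1 ∈ Icc a b := hn (M + 1) (by omega) hmu
        set r : ℝ := mu φ v w (M + 2) p / mu φ v w (M + 1) p with hr
        have hr0 : 0 ≤ r := div_nonneg (mu_nonneg φ v w _ p) hmu.le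
        have hr1 : r ≤ 1 := div_le_one_of_le₀ (mu_anti φ v w (by omega) p) hmu.le
        have hz' : v (M + 1) p.1 + r * (z - v (M + 1) p.1) ∈ Icc a b := by
          constructor
          · nlinarith [hvM1.1, hz.1]
          · nlinarith [hvM1.2, hz.2]
        have halg : Sf φ v w (M + 1) p + mu φ v w (M + 2) p * (z - v (M + 1) p.1)
            = Sf φ v w M p + mu φ v w (M + 1) p
              * ((v (M + 1) p.1 + r * (z - v (M + 1) p.1)) - v M p.1) := by
          rw [Sf_succ]
          have : mu φ v w (M + 1) p * r = mu φ v w (M + 2) p := by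
            rw [hr]; field_simp
          linear_combination (v (M + 1) p.1 - z) * this
        rw [halg]
        exact ih _ hz'
  intro M hM
  rcases eq_or_lt_of_le (mu_nonneg φ v w (M + 1) p) with hmu | hmu
  · have h := main M hM (v N p.1) hN
    rw [← hmu] at h; simpa using h
  · have hvM : v M p.1 ∈ Icc a b := by
      rcases eq_or_lt_of_le hM with h | h
      · exact h ▸ hN
      · exact hn M h (lt_of_lt_of_le hmu (mu_anti φ v w (show M ≤ M + 1 by omega) p))
    have := main M hM (v M p.1) hvM
    simpa using this



lemma Sf_cont (hφ : Continuous φ) (hv : ∀ n, Continuous (v n))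
    (hw : ∀ n, Continuous (w n)) (M : ℕ) : Continuous (Sf φ v w M) := by
  apply Continuous.add ((hv 0).comp continuous_fst)
  apply continuous_finset_sum
  intro n _
  exact (mu_cont φ v w hφ hv hw (n + 1)).mul
    (((hv (n + 1)).comp continuous_fst).sub ((hv n).comp continuous_fst))

lemma mu_one_of_zero (hvw : ∀ p, φ p = 0 → ∀ n, v n p.1 = w n p.2)
    {p : X × Y} (hp : φ p = 0) (n : ℕ) : mu φ v w n p = 1 := by
  apply mu_one
  rw [hp, Cf_zero v w (hvw p hp) n]
  simp

lemma Stend_zero (hvw : ∀ p, φ p = 0 → ∀ n, v n p.1 = w n p.2)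
    {L : X × Y → ℝ} (hL : ∀ p, φ p = 0 → Tendsto (fun n => v n p.1) atTop (𝓝 (L p)))
    {p : X × Y} (hp : φ p = 0) :
    Tendsto (fun M => Sf φ v w M p) atTop (𝓝 (L p)) := by
  have he : (fun M => Sf φ v w M p) = fun M => v M p.1 := by
    funext M
    exact Sf_telescope φ v w M (fun k _ _ => mu_one_of_zero φ v w hvw hp k)
  rw [he]
  exact hL p hp

lemma Stend_ne {p : X × Y} (hp : φ p ≠ 0) :
    ∃ M₀ : ℕ, ∀ M, M₀ ≤ M → Sf φ v w M p = Sf φ v w M₀ p := by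
  have ht : 0 < |φ p| := abs_pos.2 hp
  refine ⟨Nat.ceil (2 / |φ p|), Sf_const φ v w _ ?_⟩
  intro n hn
  apply mu_zero
  have h1 : 2 / |φ p| ≤ (n : ℝ) :=
    le_trans (Nat.le_ceil _) (Nat.cast_le.2 (by omega))
  calc (2 : ℝ) = 2 / |φ p| * |φ p| := by field_simp
  _ ≤ (n : ℝ) * |φ p| := mul_le_mul_of_nonneg_right h1 (abs_nonneg _)

lemma Stend (hvw : ∀ p, φ p = 0 → ∀ n, v n p.1 = w n p.2)
    {L : X × Y → ℝ} (hL : ∀ p, φ p = 0 → Tendsto (fun n => v n p.1) atTop (𝓝 (L p)))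
    (p : X × Y) :
    Tendsto (fun M => Sf φ v w M p) atTop (𝓝 (Ff φ v w p)) := by
  apply tendsto_nhds_limUnder
  by_cases hp : φ p = 0
  · exact ⟨L p, Stend_zero φ v w hvw hL hp⟩
  · obtain ⟨M₀, hM₀⟩ := Stend_ne φ v w hp
    exact ⟨Sf φ v w M₀ p, tendsto_atTop_of_eventually_const hM₀⟩

lemma Ff_eq (hvw : ∀ p, φ p = 0 → ∀ n, v n p.1 = w n p.2)
    {L : X × Y → ℝ} (hL : ∀ p, φ p = 0 → Tendsto (fun n => v n p.1) atTop (𝓝 (L p)))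
    {p : X × Y} (hp : φ p = 0) : Ff φ v w p = L p :=
  (Stend_zero φ v w hvw hL hp).limUnder_eq

lemma Ff_mem (hvw : ∀ p, φ p = 0 → ∀ n, v n p.1 = w n p.2)
    {L : X × Y → ℝ} (hL : ∀ p, φ p = 0 → Tendsto (fun n => v n p.1) atTop (𝓝 (L p)))
    {p : X × Y} {a b : ℝ} {N : ℕ} (h : ∀ M, N ≤ M → Sf φ v w M p ∈ Icc a b) :
    Ff φ v w p ∈ Icc a b :=
  isClosed_Icc.mem_of_tendsto (Stend φ v w hvw hL p) (eventually_atTop.2 ⟨N, h⟩)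

lemma Ff_contAt (hφ : Continuous φ) (hv : ∀ n, Continuous (v n))
    (hw : ∀ n, Continuous (w n)) {p₀ : X × Y} (hp₀ : φ p₀ ≠ 0) :
    ContinuousAt (Ff φ v w) p₀ := by
  have ht : 0 < |φ p₀| := abs_pos.2 hp₀
  set M₁ : ℕ := Nat.ceil (4 / |φ p₀|) with hM₁
  have hW : ∀ p : X × Y, |φ p₀| / 2 < |φ p| → Ff φ v w p = Sf φ v w M₁ p := by
    intro p hp
    have hconst : ∀ M, M₁ ≤ M → Sf φ v w M p = Sf φ v w M₁ p := by
      apply Sf_const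
      intro n hn
      apply mu_zero
      have h1 : 4 / |φ p₀| ≤ (n : ℝ) :=
        le_trans (Nat.le_ceil _) (Nat.cast_le.2 (by omega))
      have h2 : (0 : ℝ) < 4 / |φ p₀| := by positivity
      calc (2 : ℝ) = 4 / |φ p₀| * (|φ p₀| / 2) := by field_simp; ring
      _ ≤ (n : ℝ) * (|φ p₀| / 2) := mul_le_mul_of_nonneg_right h1 (by linarith)
      _ ≤ (n : ℝ) * |φ p| := mul_le_mul_of_nonneg_left hp.le (Nat.cast_nonneg n)
    exact (tendsto_atTop_of_eventually_const hconst).limUnder_eq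
  have hWopen : IsOpen {p : X × Y | |φ p₀| / 2 < |φ p|} :=
    isOpen_lt continuous_const hφ.abs
  have hmem : {p : X × Y | |φ p₀| / 2 < |φ p|} ∈ 𝓝 p₀ :=
    hWopen.mem_nhds (by simp only [mem_setOf_eq]; linarith)
  exact (Sf_cont φ v w hφ hv hw M₁).continuousAt.congr
    (Filter.eventuallyEq_of_mem hmem (fun p hp => (hW p hp).symm))


variable {φ v w} in
lemma contAt_fst_zero (hφ : Continuous φ) (hv : ∀ n, Continuous (v n))
    (hw : ∀ n, Continuous (w n))
    (hvw : ∀ p, φ p = 0 → ∀ n, v n p.1 = w n p.2)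
    {L : X × Y → ℝ} (hL : ∀ p, φ p = 0 → Tendsto (fun n => v n p.1) atTop (𝓝 (L p)))
    {x₀ : X} {y₀ : Y} (h0 : φ (x₀, y₀) = 0) :
    ContinuousAt (fun y => Ff φ v w (x₀, y)) y₀ := by
  have hFp₀ : Ff φ v w (x₀, y₀) = L (x₀, y₀) := Ff_eq φ v w hvw hL h0
  rw [ContinuousAt, Metric.tendsto_nhds]
  intro ε hε
  have hv_lim := hL (x₀, y₀) h0
  rw [Metric.tendsto_atTop] at hv_lim
  obtain ⟨N₀, hN₀⟩ := hv_lim (ε / 4) (by positivity)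
  set N := N₀ + 1 with hN
  have hΩopen : IsOpen {y : Y | (N : ℝ) * (|φ (x₀, y)| + Cf v w N (x₀, y)) < 1} := by
    apply isOpen_lt _ continuous_const
    exact continuous_const.mul
      (((hφ.comp (Continuous.prodMk_right x₀)).abs).add
        ((Cf_cont v w hv hw N).comp (Continuous.prodMk_right x₀)))
  have hy₀ : y₀ ∈ {y : Y | (N : ℝ) * (|φ (x₀, y)| + Cf v w N (x₀, y)) < 1} := by
    simp only [mem_setOf_eq]
    rw [Cf_zero v w (hvw _ h0) N, h0]
    norm_num
  filter_upwards [hΩopen.mem_nhds hy₀] with y hy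
  have hmuN : mu φ v w N (x₀, y) = 1 := mu_one φ v w hy.le
  have hSN : Sf φ v w N (x₀, y) = v N x₀ :=
    Sf_telescope φ v w N (fun k _ hk2 =>
      le_antisymm (mu_le_one φ v w k _) (hmuN ▸ mu_anti φ v w hk2 (x₀, y)))
  have hkey : ∀ M, N ≤ M →
      Sf φ v w M (x₀, y) ∈ Icc (L (x₀, y₀) - ε / 2) (L (x₀, y₀) + ε / 2) := by
    apply key φ v w hSN
    · have h := hN₀ N (by omega)
      rw [Real.dist_eq] at h
      obtain ⟨h1, h2⟩ := abs_lt.1 h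
      exact ⟨by linarith, by linarith⟩
    · intro n hn _
      have h := hN₀ n (by omega)
      rw [Real.dist_eq] at h
      obtain ⟨h1, h2⟩ := abs_lt.1 h
      exact ⟨by linarith, by linarith⟩
  have hmem := Ff_mem φ v w hvw hL hkey
  rw [hFp₀, Real.dist_eq]
  rw [mem_Icc] at hmem
  rw [abs_lt]
  constructor <;> [linarith [hmem.1]; linarith [hmem.2]]

variable {φ v w} in
lemma contAt_snd_zero (hφ : Continuous φ) (hv : ∀ n, Continuous (v n))
    (hw : ∀ n, Continuous (w n))
    (hvw : ∀ p, φ p = 0 → ∀ n, v n p.1 = w n p.2)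
    {L : X × Y → ℝ} (hL : ∀ p, φ p = 0 → Tendsto (fun n => v n p.1) atTop (𝓝 (L p)))
    {x₀ : X} {y₀ : Y} (h0 : φ (x₀, y₀) = 0) :
    ContinuousAt (fun x => Ff φ v w (x, y₀)) x₀ := by
  have hFp₀ : Ff φ v w (x₀, y₀) = L (x₀, y₀) := Ff_eq φ v w hvw hL h0
  rw [ContinuousAt, Metric.tendsto_nhds]
  intro ε hε
  have hw_lim : Tendsto (fun n => w n y₀) atTop (𝓝 (L (x₀, y₀))) := by
    have he : (fun n => w n y₀) = fun n => v n x₀ :=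
      funext fun n => (hvw _ h0 n).symm
    rw [he]; exact hL _ h0
  rw [Metric.tendsto_atTop] at hw_lim
  obtain ⟨N₀, hN₀⟩ := hw_lim (ε / 4) (by positivity)
  set N := max (N₀ + 1) (Nat.ceil ((8 : ℝ) / ε)) with hN
  have h8 : (8 : ℝ) / ε ≤ (N : ℝ) :=
    le_trans (Nat.le_ceil _) (Nat.cast_le.2 (le_max_right _ _))
  have hNpos : (0 : ℝ) < (N : ℝ) := lt_of_lt_of_le (by positivity) h8
  have hNε : 2 / (N : ℝ) ≤ ε / 4 := by
    rw [div_le_div_iff₀ hNpos (by norm_num)]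
    have := (div_le_iff₀ hε).1 h8
    nlinarith
  have hΩopen : IsOpen {x : X | (N : ℝ) * (|φ (x, y₀)| + Cf v w N (x, y₀)) < 1} := by
    apply isOpen_lt _ continuous_const
    exact continuous_const.mul
      (((hφ.comp (Continuous.prodMk continuous_id continuous_const)).abs).add
        ((Cf_cont v w hv hw N).comp (Continuous.prodMk continuous_id continuous_const)))
  have hx₀ : x₀ ∈ {x : X | (N : ℝ) * (|φ (x, y₀)| + Cf v w N (x, y₀)) < 1} := by
    simp only [mem_setOf_eq]
    rw [Cf_zero v w (hvw _ h0) N, h0]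
    norm_num
  filter_upwards [hΩopen.mem_nhds hx₀] with x hx
  have hmuN : mu φ v w N (x, y₀) = 1 := mu_one φ v w hx.le
  have hSN : Sf φ v w N (x, y₀) = v N x :=
    Sf_telescope φ v w N (fun k _ hk2 =>
      le_antisymm (mu_le_one φ v w k _) (hmuN ▸ mu_anti φ v w hk2 (x, y₀)))
  have hgood : ∀ n, N ≤ n → Cf v w n (x, y₀) < 2 / (n : ℝ) →
      v n x ∈ Icc (L (x₀, y₀) - ε / 2) (L (x₀, y₀) + ε / 2) := by
    intro n hn hC
    have hnpos : (0 : ℝ) < (n : ℝ) := lt_of_lt_of_le hNpos (Nat.cast_le.2 hn)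
    have h2n : 2 / (n : ℝ) ≤ 2 / (N : ℝ) := by gcongr <;> exact_mod_cast hn
    have h1 : |v n x - w n y₀| < ε / 4 :=
      lt_of_le_of_lt (Cf_single v w n (x, y₀)) (by linarith)
    have h2 : |w n y₀ - L (x₀, y₀)| < ε / 4 := by
      have := hN₀ n (le_trans (by omega) hn)
      rwa [Real.dist_eq] at this
    have h3 : |v n x - L (x₀, y₀)| ≤ |v n x - w n y₀| + |w n y₀ - L (x₀, y₀)| :=
      abs_sub_le _ _ _
    have h4 : |v n x - L (x₀, y₀)| < ε / 2 := by linarith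
    obtain ⟨h5, h6⟩ := abs_lt.1 h4
    exact ⟨by linarith, by linarith⟩
  have hkey : ∀ M, N ≤ M →
      Sf φ v w M (x, y₀) ∈ Icc (L (x₀, y₀) - ε / 2) (L (x₀, y₀) + ε / 2) := by
    apply key φ v w hSN
    · apply hgood N le_rfl
      have hC0 : (0 : ℝ) ≤ |φ (x, y₀)| := abs_nonneg _
      rw [lt_div_iff₀ hNpos]
      nlinarith [Cf_nonneg v w N (x, y₀)]
    · intro n hn hmu
      apply hgood n hn.le
      have hnpos : (0 : ℝ) < (n : ℝ) := lt_of_lt_of_le hNpos (Nat.cast_le.2 hn.le)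
      rw [lt_div_iff₀ hnpos]
      have := mu_pos φ v w hmu
      linarith [this]
  have hmem := Ff_mem φ v w hvw hL hkey
  rw [hFp₀, Real.dist_eq]
  rw [mem_Icc] at hmem
  rw [abs_lt]
  exact ⟨by linarith [hmem.1], by linarith [hmem.2]⟩



variable {φ v w} in
theorem aux (hφ : Continuous φ) (hv : ∀ n, Continuous (v n))
    (hv01 : ∀ n x, v n x ∈ Icc (0:ℝ) 1) (hw : ∀ n, Continuous (w n))
    (hvw : ∀ p, φ p = 0 → ∀ n, v n p.1 = w n p.2)
    {L : X × Y → ℝ} (hL : ∀ p, φ p = 0 → Tendsto (fun n => v n p.1) atTop (𝓝 (L p))) :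
    (∀ x, Continuous fun y => Ff φ v w (x, y)) ∧
    (∀ y, Continuous fun x => Ff φ v w (x, y)) ∧
    (∀ p, Ff φ v w p ∈ Icc (0:ℝ) 1) ∧
    (∀ p, φ p = 0 → Ff φ v w p = L p) := by
  refine ⟨?_, ?_, ?_, fun p hp => Ff_eq φ v w hvw hL hp⟩
  · intro x₀
    rw [continuous_iff_continuousAt]
    intro y₀
    by_cases h0 : φ (x₀, y₀) = 0
    · exact contAt_fst_zero hφ hv hw hvw hL h0
    · exact (Ff_contAt φ v w hφ hv hw h0).comp (Continuous.prodMk_right x₀).continuousAt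
  · intro y₀
    rw [continuous_iff_continuousAt]
    intro x₀
    by_cases h0 : φ (x₀, y₀) = 0
    · exact contAt_snd_zero hφ hv hw hvw hL h0
    · have hc : Continuous (fun x : X => (x, y₀)) := continuous_id.prodMk continuous_const
      exact ContinuousAt.comp (x := x₀) (g := Ff φ v w) (Ff_contAt φ v w hφ hv hw h0)
        hc.continuousAt
  · intro p
    exact Ff_mem φ v w hvw hL
      (key φ v w (Sf_zero φ v w p) (hv01 0 p.1) (fun n _ _ => hv01 n p.1))

def theta (t : ℝ) : ℝ := (1 + |t| + t) / (2 * (1 + |t|))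

def iota (s : ℝ) : ℝ := (2 * s - 1) / (1 - |2 * s - 1|)

lemma theta_cont : Continuous theta :=
  Continuous.div (by continuity) (by continuity)
    (fun t => by positivity)

lemma theta_mem_Ioo (t : ℝ) : theta t ∈ Ioo (0:ℝ) 1 := by
  have hden : (0:ℝ) < 2 * (1 + |t|) := by positivity
  constructor
  · apply div_pos ?_ hden
    nlinarith [neg_abs_le t, abs_nonneg t]
  · rw [theta, div_lt_one hden]
    nlinarith [le_abs_self t]

lemma iota_contOn : ContinuousOn iota (Ioo (0:ℝ) 1) := by
  apply ContinuousOn.div (by fun_prop) (by fun_prop)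
  intro s hs
  have h1 : |2 * s - 1| < 1 := abs_lt.2 ⟨by linarith [hs.1], by linarith [hs.2]⟩
  intro h
  rw [sub_eq_zero] at h
  linarith [h.symm]

lemma iota_theta (t : ℝ) : iota (theta t) = t := by
  have hpos : (0:ℝ) < 1 + |t| := by positivity
  have h2 : 2 * theta t - 1 = t / (1 + |t|) := by
    rw [theta]; field_simp; ring
  have h3 : |t / (1 + |t|)| = |t| / (1 + |t|) := by
    rw [abs_div, abs_of_pos hpos]
  have h4 : 1 - |t| / (1 + |t|) = 1 / (1 + |t|) := by field_simp; ring
  rw [iota, h2, h3, h4]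
  field_simp

end SepExtAux

open SepExtAux in
theorem stmt6 {X Y : Type*} [TopologicalSpace X] [TopologicalSpace Y]
    (X₁ : Set X) (Y₁ : Set Y)
    (hX₁ : ∀ u : X₁ → ℝ, Continuous u → (∀ a, u a ∈ Icc (0:ℝ) 1) →
      ∃ v : X → ℝ, Continuous v ∧ (∀ x, v x ∈ Icc (0:ℝ) 1) ∧ ∀ a : X₁, v a = u a)
    (hY₁ : ∀ u : Y₁ → ℝ, Continuous u → (∀ b, u b ∈ Icc (0:ℝ) 1) →
      ∃ v : Y → ℝ, Continuous v ∧ (∀ y, v y ∈ Icc (0:ℝ) 1) ∧ ∀ b : Y₁, v b = u b)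
    (e : X₁ ≃ₜ Y₁)
    (E : Set (X × Y)) (hE : E = {p : X × Y | ∃ x : X₁, p = ((x : X), (e x : Y))})
    (g : E → ℝ)
    (hg : ∃ gs : ℕ → E → ℝ, (∀ n, Continuous (gs n)) ∧
      ∀ p : E, Tendsto (fun n => gs n p) atTop (𝓝 (g p)))
    (hEfc : ∃ φ : X × Y → ℝ, Continuous φ ∧ E = φ ⁻¹' {0}) :
    ∃ f : X × Y → ℝ,
      (∀ x : X, Continuous fun y => f (x, y)) ∧
      (∀ y : Y, Continuous fun x => f (x, y)) ∧
      (∀ p : E, f p = g p) := by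
  classical
  obtain ⟨gs, hgsc, hgsl⟩ := hg
  obtain ⟨φ, hφc, hφE⟩ := hEfc
  have hmemE : ∀ p : X × Y, φ p = 0 ↔ p ∈ E := by
    intro p; rw [hφE]; simp
  have hEmemx : ∀ a : X₁, ((a : X), (e a : Y)) ∈ E := by
    intro a; rw [hE]; exact ⟨a, rfl⟩
  have hEmemy : ∀ b : Y₁, ((e.symm b : X), (b : Y)) ∈ E := by
    intro b; rw [hE]; exact ⟨e.symm b, by rw [e.apply_symm_apply]⟩
  have hexv : ∀ n : ℕ, ∃ vn : X → ℝ, Continuous vn ∧ (∀ x, vn x ∈ Icc (0:ℝ) 1) ∧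
      ∀ a : X₁, vn a = theta (gs n ⟨((a : X), (e a : Y)), hEmemx a⟩) := by
    intro n
    refine hX₁ (fun a => theta (gs n ⟨((a : X), (e a : Y)), hEmemx a⟩)) ?_ ?_
    · exact theta_cont.comp ((hgsc n).comp (Continuous.subtype_mk
        (continuous_subtype_val.prodMk (continuous_subtype_val.comp e.continuous)) _))
    · intro a; exact mem_Icc_of_Ioo (theta_mem_Ioo _)
  choose v hvc hv01 hvX using hexv
  have hexw : ∀ n : ℕ, ∃ wn : Y → ℝ, Continuous wn ∧ (∀ y, wn y ∈ Icc (0:ℝ) 1) ∧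
      ∀ b : Y₁, wn b = theta (gs n ⟨((e.symm b : X), (b : Y)), hEmemy b⟩) := by
    intro n
    refine hY₁ (fun b => theta (gs n ⟨((e.symm b : X), (b : Y)), hEmemy b⟩)) ?_ ?_
    · exact theta_cont.comp ((hgsc n).comp (Continuous.subtype_mk
        ((continuous_subtype_val.comp e.symm.continuous).prodMk continuous_subtype_val) _))
    · intro b; exact mem_Icc_of_Ioo (theta_mem_Ioo _)
  choose w hwc hw01 hwY using hexw
  have hvgs : ∀ (n : ℕ) (p : X × Y) (hp : p ∈ E), v n p.1 = theta (gs n ⟨p, hp⟩) := by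
    intro n p hp
    have hp' := hp
    rw [hE] at hp'
    obtain ⟨x, hx⟩ := hp'
    subst hx
    exact hvX n x
  have hwgs : ∀ (n : ℕ) (p : X × Y) (hp : p ∈ E), w n p.2 = theta (gs n ⟨p, hp⟩) := by
    intro n p hp
    have hp' := hp
    rw [hE] at hp'
    obtain ⟨x, hx⟩ := hp'
    subst hx
    have h := hwY n (e x)
    rw [h]
    congr 1
    apply congrArg
    apply Subtype.ext
    simp [e.symm_apply_apply]
  have hvw : ∀ p : X × Y, φ p = 0 → ∀ n, v n p.1 = w n p.2 := by
    intro p hp n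
    have hpE := (hmemE p).1 hp
    rw [hvgs n p hpE, hwgs n p hpE]
  set L : X × Y → ℝ := fun p => if h : p ∈ E then theta (g ⟨p, h⟩) else 0 with hLdef
  have hL : ∀ p : X × Y, φ p = 0 → Tendsto (fun n => v n p.1) atTop (𝓝 (L p)) := by
    intro p hp
    have hpE := (hmemE p).1 hp
    have hLp : L p = theta (g ⟨p, hpE⟩) := dif_pos hpE
    rw [hLp]
    have he : (fun n => v n p.1) = fun n => theta (gs n ⟨p, hpE⟩) :=
      funext fun n => hvgs n p hpE
    rw [he]
    exact (theta_cont.tendsto _).comp (hgsl ⟨p, hpE⟩)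
  obtain ⟨hF1, hF2, hF01, hFE⟩ := aux hφc hvc hv01 hwc hvw hL
  set κ : X × Y → ℝ := fun p => |φ p| / (2 * (1 + |φ p|)) with hκdef
  have hκc : Continuous κ := by
    apply Continuous.div hφc.abs (by fun_prop)
    intro p; positivity
  have hκ0 : ∀ p, 0 ≤ κ p := fun p => div_nonneg (abs_nonneg _) (by positivity)
  have hκhalf : ∀ p, κ p < 1 / 2 := by
    intro p
    rw [hκdef, div_lt_iff₀ (by positivity)]
    nlinarith [abs_nonneg (φ p)]
  have hκzero : ∀ p, φ p = 0 → κ p = 0 := by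
    intro p hp; simp [hκdef, hp]
  set G : X × Y → ℝ := fun p => max (κ p) (min (Ff φ v w p) (1 - κ p)) with hGdef
  have hGE : ∀ (p : X × Y) (hp : p ∈ E), G p = theta (g ⟨p, hp⟩) := by
    intro p hp
    have hp0 : φ p = 0 := (hmemE p).2 hp
    have hFp : Ff φ v w p = theta (g ⟨p, hp⟩) := by
      rw [hFE p hp0]; exact dif_pos hp
    obtain ⟨ht0, ht1⟩ := theta_mem_Ioo (g ⟨p, hp⟩)
    rw [hGdef]
    simp only
    rw [hκzero p hp0, hFp, sub_zero, min_eq_left ht1.le, max_eq_right ht0.le]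
  have hGmem : ∀ p, G p ∈ Ioo (0:ℝ) 1 := by
    intro p
    by_cases hp0 : φ p = 0
    · have hp : p ∈ E := (hmemE p).1 hp0
      rw [hGE p hp]; exact theta_mem_Ioo _
    · have hκpos : 0 < κ p := div_pos (abs_pos.2 hp0) (by positivity)
      constructor
      · exact lt_of_lt_of_le hκpos (le_max_left _ _)
      · apply max_lt (lt_trans (hκhalf p) (by norm_num))
        exact lt_of_le_of_lt (min_le_right _ _) (by linarith [hκpos])
  refine ⟨fun p => iota (G p), ?_, ?_, ?_⟩
  · intro x₀
    have hGl : Continuous fun y => G (x₀, y) := by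
      apply Continuous.max (hκc.comp (Continuous.prodMk_right x₀))
      exact (hF1 x₀).min (continuous_const.sub (hκc.comp (Continuous.prodMk_right x₀)))
    exact iota_contOn.comp_continuous hGl (fun y => hGmem (x₀, y))
  · intro y₀
    have hc : Continuous (fun x : X => (x, y₀)) := continuous_id.prodMk continuous_const
    have hGl : Continuous fun x => G (x, y₀) := by
      apply Continuous.max (hκc.comp hc)
      exact (hF2 y₀).min (continuous_const.sub (hκc.comp hc))
    exact iota_contOn.comp_continuous hGl (fun x => hGmem (x, y₀))
  · intro p
    show iota (G p.1) = g p
    rw [hGE p.1 p.2, iota_theta]
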